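/- For every integer n ≥ 1 there exists a deterministic strategy q : List ℝ → {0,1}^n such that for every z ∈ {0,1}^n and every function f : {0,1}^n → ℝ that is monotone with respect to z, the hitting time satisfies τ(q, f, {z}) ≤ n + 1. -/

import Mathlib

open scoped ENNReal

namespace BBC

variable {S V : Type*}

/-- The history of observed objective values after `t` queries:
`hist q f t = [f x₁, …, f x_t]`, where `x₁ = q []` and
`x_{t+1} = q [f x₁, …, f x_t]`. -/
def hist (q : List V → S) (f : S → V) : ℕ → List V
  | 0 => []
  | t + 1 => hist q f t ++ [f (q (hist q f t))]

/-- `queryPt q f t` is the `(t+1)`-st queried search point `x_{t+1}`. -/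
def queryPt (q : List V → S) (f : S → V) (t : ℕ) : S := q (hist q f t)

/-- The hitting time of a deterministic strategy `q` on objective `f` with
target set `M`: the least `t ≥ 1` with `x_t ∈ M`, valued in `ℕ∞`
(and `⊤` if no query ever hits `M`). -/
noncomputable def hitTime (q : List V → S) (f : S → V) (M : Set S) : ℕ∞ :=
  sInf ((fun k : ℕ => (k : ℕ∞) + 1) '' {k | queryPt q f k ∈ M})

/-- The expected hitting time of a randomized strategy `μ` (a probability mass
function on deterministic strategies) on `(f, M)`, valued in `[0,∞]`. -/
noncomputable def expHitTime (μ : PMF (List V → S)) (f : S → V) (M : Set S) : ℝ≥0∞ :=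
  ∑' q, μ q * (hitTime q f M : ℝ≥0∞)

end BBC

/-- `f` is monotone with respect to `z`. -/
def MonotoneWrt {n : ℕ} (z : Fin n → Bool) (f : (Fin n → Bool) → ℝ) : Prop :=
  ∀ y y' : Fin n → Bool, {i | y i = z i} ⊂ {i | y' i = z i} → f y < f y'

namespace Stmt6Aux

noncomputable def flipAt {n : ℕ} (c : Fin n → Bool) (j : Fin n) : Fin n → Bool :=
  Function.update c j (!c j)

lemma flipAt_same {n : ℕ} (c : Fin n → Bool) (j : Fin n) : flipAt c j j = !c j :=
  Function.update_self _ _ _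

lemma flipAt_ne {n : ℕ} (c : Fin n → Bool) (j i : Fin n) (h : i ≠ j) :
    flipAt c j i = c i := Function.update_of_ne h _ _

lemma key {n : ℕ} {z : Fin n → Bool} {f : (Fin n → Bool) → ℝ}
    (hf : MonotoneWrt z f) (c : Fin n → Bool) (j : Fin n) :
    f c < f (flipAt c j) ↔ c j ≠ z j := by
  by_cases h : c j = z j
  · simp only [h, ne_eq, not_true_eq_false, iff_false, not_lt]
    have : {i | flipAt c j i = z i} ⊂ {i | c i = z i} := by
      constructor
      · intro i hi
        by_cases hij : i = j
        · subst hij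
          exfalso
          have := hi
          simp only [Set.mem_setOf_eq, flipAt_same] at this
          rw [← h] at this
          cases c i <;> simp_all
        · simpa [Set.mem_setOf_eq, flipAt_ne c j i hij] using hi
      · intro hsub
        have hj : j ∈ {i | c i = z i} := h
        have := hsub hj
        simp only [Set.mem_setOf_eq, flipAt_same] at this
        rw [← h] at this
        cases c j <;> simp_all
    exact le_of_lt (hf _ _ this)
  · simp only [ne_eq, h, not_false_eq_true, iff_true]
    have : {i | c i = z i} ⊂ {i | flipAt c j i = z i} := by
      constructor
      · intro i hi
        by_cases hij : i = j
        · subst hij; exact absurd hi h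
        · simpa [Set.mem_setOf_eq, flipAt_ne c j i hij] using hi
      · intro hsub
        have hj : j ∈ {i | flipAt c j i = z i} := by
          simp only [Set.mem_setOf_eq, flipAt_same]
          cases hc : c j <;> cases hz : z j <;> simp_all
        exact h (hsub hj)
    exact hf _ _ this

noncomputable def step (n : ℕ) : ((Fin n → Bool) × ℝ × ℕ) → ℝ → ((Fin n → Bool) × ℝ × ℕ)
  | (c, vb, t), v =>
    if t = 0 then (c, v, 1)
    else if h : t - 1 < n then
      if vb < v then (flipAt c ⟨t - 1, h⟩, v, t + 1) else (c, vb, t + 1)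
    else (c, vb, t + 1)

noncomputable def state (n : ℕ) (h : List ℝ) : (Fin n → Bool) × ℝ × ℕ :=
  h.foldl (step n) (fun _ => false, 0, 0)

noncomputable def strat (n : ℕ) (h : List ℝ) : Fin n → Bool :=
  let s := state n h
  if s.2.2 = 0 then fun _ => false
  else if hlt : s.2.2 - 1 < n then flipAt s.1 ⟨s.2.2 - 1, hlt⟩
  else s.1

lemma state_append (n : ℕ) (h : List ℝ) (v : ℝ) :
    state n (h ++ [v]) = step n (state n h) v := by
  simp [state, List.foldl_append]

/-- current point after deciding first `t` bits. -/
noncomputable def pt {n : ℕ} (z : Fin n → Bool) (t : ℕ) : Fin n → Bool :=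
  fun i => if (i : ℕ) < t then z i else false

lemma inv {n : ℕ} (z : Fin n → Bool) (f : (Fin n → Bool) → ℝ)
    (hf : MonotoneWrt z f) :
    ∀ s, s ≤ n →
      state n (BBC.hist (strat n) f (s + 1)) = (pt z s, f (pt z s), s + 1) ∧
      ∃ m ≤ s, BBC.queryPt (strat n) f m = pt z s := by
  intro s
  induction s with
  | zero =>
    intro _
    have hstrat0 : strat n [] = pt z 0 := by
      have hst : state n [] = (fun _ => false, 0, 0) := rfl
      simp only [strat, hst]
      norm_num
      funext i; simp [pt]
    have hq0 : BBC.queryPt (strat n) f 0 = pt z 0 := by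
      simpa [BBC.queryPt, BBC.hist] using hstrat0
    constructor
    · show state n ([] ++ [f (strat n (BBC.hist (strat n) f 0))]) = _
      rw [show BBC.hist (strat n) f 0 = [] from rfl, state_append, hstrat0]
      show step n (fun _ => false, 0, 0) _ = _
      have : (fun _ : Fin n => false) = pt z 0 := by funext i; simp [pt]
      rw [this]
      simp [step]
    · exact ⟨0, le_refl 0, hq0⟩
  | succ s ih =>
    intro hs
    have hsn : s < n := Nat.lt_of_succ_le hs
    obtain ⟨hstate, m, hm, hqm⟩ := ih (Nat.le_of_lt hsn)
    set j : Fin n := ⟨s, hsn⟩ with hj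
    have hstrat : strat n (BBC.hist (strat n) f (s + 1)) = flipAt (pt z s) j := by
      simp [strat, hstate, hsn]
      rfl
    have hhist : BBC.hist (strat n) f (s + 2)
        = BBC.hist (strat n) f (s + 1) ++ [f (flipAt (pt z s) j)] := by
      rw [show BBC.hist (strat n) f (s + 2)
        = BBC.hist (strat n) f (s + 1)
          ++ [f (strat n (BBC.hist (strat n) f (s + 1)))] from rfl, hstrat]
    have hptj : pt z s j = false := by simp [pt, hj]
    have hkey : f (pt z s) < f (flipAt (pt z s) j) ↔ z j = true := by
      rw [key hf (pt z s) j, hptj]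
      cases z j <;> simp
    by_cases hz : z j = true
    · -- accepted flip
      have hpt : flipAt (pt z s) j = pt z (s + 1) := by
        funext i
        by_cases hij : i = j
        · subst hij; rw [flipAt_same, hptj]
          simp [pt, hj, Nat.lt_succ_iff, hz]
          exact hz
        · rw [flipAt_ne _ _ _ hij]
          have : (i : ℕ) ≠ s := fun h => hij (Fin.ext h)
          simp only [pt, show ((i:ℕ) < s + 1 ↔ (i:ℕ) < s) from by omega]
      constructor
      · rw [hhist, state_append, hstate]
        simp only [step, Nat.succ_ne_zero, if_false, Nat.add_sub_cancel, hsn, dif_pos]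
        rw [if_pos (hkey.mpr hz)]
        rw [hpt]
      · refine ⟨s + 1, le_refl _, ?_⟩
        rw [BBC.queryPt, hstrat, hpt]
    · -- rejected flip
      have hzf : z j = false := by cases h : z j <;> simp_all
      have hpt : pt z (s + 1) = pt z s := by
        funext i
        by_cases his : (i : ℕ) = s
        · have : i = j := Fin.ext his
          subst this
          simp [pt, hj, hzf]
          exact hzf
        · simp only [pt, show ((i:ℕ) < s + 1 ↔ (i:ℕ) < s) from by omega]
      constructor
      · rw [hhist, state_append, hstate]
        simp only [step, Nat.succ_ne_zero, if_false, Nat.add_sub_cancel, hsn, dif_pos]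
        rw [if_neg (by rw [hkey]; simp [hzf]), hpt]
      · exact ⟨m, Nat.le_succ_of_le hm, by rw [hqm, hpt]⟩

end Stmt6Aux

/-- A single deterministic strategy optimizes every function that is monotone
with respect to some `z` within `n+1` queries. -/


theorem stmt6 (n : ℕ) (hn : 1 ≤ n) :
    ∃ q : List ℝ → (Fin n → Bool),
      ∀ (z : Fin n → Bool) (f : (Fin n → Bool) → ℝ),
        MonotoneWrt z f → BBC.hitTime q f {z} ≤ (n : ℕ∞) + 1 := by
  refine ⟨Stmt6Aux.strat n, fun z f hf => ?_⟩
  obtain ⟨-, m, hm, hqm⟩ := Stmt6Aux.inv z f hf n le_rfl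
  have hpt : Stmt6Aux.pt z n = z := by
    funext i; simp [Stmt6Aux.pt, i.isLt]
  rw [hpt] at hqm
  have hmem : (m : ℕ∞) + 1 ∈
      ((fun k : ℕ => (k : ℕ∞) + 1) '' {k | BBC.queryPt (Stmt6Aux.strat n) f k ∈ ({z} : Set _)}) :=
    ⟨m, hqm, rfl⟩
  calc BBC.hitTime (Stmt6Aux.strat n) f {z} ≤ (m : ℕ∞) + 1 := sInf_le hmem
    _ ≤ (n : ℕ∞) + 1 := by
        have : (m : ℕ∞) ≤ (n : ℕ∞) := by exact_mod_cast hm.trans le_rfl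
        exact add_le_add_left this 1
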